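/- The orthogonal projection of an mn×mn Hermitian matrix M with Tr M = 0 (with respect to the Frobenius inner product ⟨A,B⟩ = Tr(AB)) onto the subspace {ξ ⊗ 1_n + 1_m ⊗ ζ : ξ ∈ Her(m), ζ ∈ Her(n), Tr ξ = Tr ζ = 0} is given by (1/n) π_1(M) ⊗ 1_n + (1/m) 1_m ⊗ π_2(M). -/

import Mathlib

open Matrix Kronecker

private lemma sum_rot' {α β γ R : Type*} [Fintype α] [Fintype β] [Fintype γ] [AddCommMonoid R]
    (f : α → β → γ → R) :
    ∑ a, ∑ b, ∑ c, f a b c = ∑ b, ∑ c, ∑ a, f a b c := by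
  rw [Finset.sum_comm]
  exact Finset.sum_congr rfl fun _ _ => Finset.sum_comm

private lemma tr_kl (m n : ℕ) (M : Matrix (Fin m × Fin n) (Fin m × Fin n) ℂ)
    (ξ : Matrix (Fin m) (Fin m) ℂ) :
    Matrix.trace (M * (ξ ⊗ₖ (1 : Matrix (Fin n) (Fin n) ℂ))) =
    Matrix.trace ((Matrix.of fun i k : Fin m => ∑ j : Fin n, M (i, j) (k, j)) * ξ) := by
  simp [Matrix.trace, Matrix.mul_apply, Matrix.diag, Matrix.one_apply,
    Fintype.sum_prod_type, mul_ite, Finset.sum_ite_eq, Finset.sum_mul]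
  exact Finset.sum_congr rfl fun x _ => Finset.sum_comm (f := fun a b => M (x, a) (b, a) * ξ b x)

private lemma tr_kr (m n : ℕ) (M : Matrix (Fin m × Fin n) (Fin m × Fin n) ℂ)
    (ζ : Matrix (Fin n) (Fin n) ℂ) :
    Matrix.trace (M * ((1 : Matrix (Fin m) (Fin m) ℂ) ⊗ₖ ζ)) =
    Matrix.trace ((Matrix.of fun j l : Fin n => ∑ i : Fin m, M (i, j) (i, l)) * ζ) := by
  simp [Matrix.trace, Matrix.mul_apply, Matrix.diag, Matrix.one_apply,
    Fintype.sum_prod_type, mul_ite, ite_mul, Finset.sum_ite_eq, Finset.sum_mul]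
  exact sum_rot' fun a b c => M (a, b) (a, c) * ζ c b

/-- The orthogonal projection (w.r.t. the Frobenius inner product `⟨A,B⟩ = Tr(AB)`) of a
traceless `mn×mn` Hermitian matrix `M` onto the subspace
`{ξ ⊗ 1_n + 1_m ⊗ ζ : ξ, ζ Hermitian traceless}` is
`P = (1/n) π₁(M) ⊗ 1_n + (1/m) 1_m ⊗ π₂(M)`: `P` lies in the subspace and `M − P` is
orthogonal to every element of the subspace. -/
theorem orthogonal_projection_partial_trace (m n : ℕ) (hm : 0 < m) (hn : 0 < n)
    (M : Matrix (Fin m × Fin n) (Fin m × Fin n) ℂ) (hM : M.IsHermitian)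
    (htr : Matrix.trace M = 0)
    (P : Matrix (Fin m × Fin n) (Fin m × Fin n) ℂ)
    (hP : P = ((n : ℂ)⁻¹ • (Matrix.of fun i k : Fin m => ∑ j : Fin n, M (i, j) (k, j))) ⊗ₖ
            (1 : Matrix (Fin n) (Fin n) ℂ) +
          (1 : Matrix (Fin m) (Fin m) ℂ) ⊗ₖ
            ((m : ℂ)⁻¹ • (Matrix.of fun j l : Fin n => ∑ i : Fin m, M (i, j) (i, l)))) :
    (∃ (ξ : Matrix (Fin m) (Fin m) ℂ) (ζ : Matrix (Fin n) (Fin n) ℂ),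
        ξ.IsHermitian ∧ ζ.IsHermitian ∧ Matrix.trace ξ = 0 ∧ Matrix.trace ζ = 0 ∧
        P = ξ ⊗ₖ (1 : Matrix (Fin n) (Fin n) ℂ) + (1 : Matrix (Fin m) (Fin m) ℂ) ⊗ₖ ζ) ∧
    (∀ (ξ : Matrix (Fin m) (Fin m) ℂ) (ζ : Matrix (Fin n) (Fin n) ℂ),
        ξ.IsHermitian → ζ.IsHermitian → Matrix.trace ξ = 0 → Matrix.trace ζ = 0 →
        Matrix.trace ((M - P) *
          (ξ ⊗ₖ (1 : Matrix (Fin n) (Fin n) ℂ) +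
            (1 : Matrix (Fin m) (Fin m) ℂ) ⊗ₖ ζ)) = 0) := by
  have hmc : (m : ℂ) ≠ 0 := Nat.cast_ne_zero.mpr hm.ne'
  have hnc : (n : ℂ) ≠ 0 := Nat.cast_ne_zero.mpr hn.ne'
  set A : Matrix (Fin m) (Fin m) ℂ :=
    Matrix.of fun i k : Fin m => ∑ j : Fin n, M (i, j) (k, j) with hA
  set B : Matrix (Fin n) (Fin n) ℂ :=
    Matrix.of fun j l : Fin n => ∑ i : Fin m, M (i, j) (i, l) with hB
  have hMapp : ∀ p q, star (M q p) = M p q := fun p q =>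
    (Matrix.conjTranspose_apply M q p).symm.trans (congrFun (congrFun hM p) q)
  have hAh : A.IsHermitian := by
    ext i k
    simp only [Matrix.conjTranspose_apply, hA, Matrix.of_apply, star_sum]
    exact Finset.sum_congr rfl fun j _ => hMapp (i, j) (k, j)
  have hBh : B.IsHermitian := by
    ext j l
    simp only [Matrix.conjTranspose_apply, hB, Matrix.of_apply, star_sum]
    exact Finset.sum_congr rfl fun i _ => hMapp (i, j) (i, l)
  have htrM : ∑ i : Fin m, ∑ j : Fin n, M (i, j) (i, j) = 0 := by
    have : Matrix.trace M = ∑ i : Fin m, ∑ j : Fin n, M (i, j) (i, j) := by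
      simp [Matrix.trace, Matrix.diag, Fintype.sum_prod_type]
    rw [← this, htr]
  have htrA : Matrix.trace A = 0 := by
    simpa [Matrix.trace, Matrix.diag, hA] using htrM
  have htrB : Matrix.trace B = 0 := by
    have := htrM
    rw [Finset.sum_comm] at this
    simpa [Matrix.trace, Matrix.diag, hB] using this
  constructor
  · refine ⟨(n : ℂ)⁻¹ • A, (m : ℂ)⁻¹ • B, ?_, ?_, ?_, ?_, hP⟩
    · show _ = _
      rw [Matrix.conjTranspose_smul, hAh.eq]
      congr 1
      simp
    · show _ = _
      rw [Matrix.conjTranspose_smul, hBh.eq]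
      congr 1
      simp
    · simp [Matrix.trace_smul, htrA]
    · simp [Matrix.trace_smul, htrB]
  · intro ξ ζ hξ hζ hξt hζt
    subst hP
    simp only [sub_mul, mul_add, add_mul, Matrix.trace_sub, Matrix.trace_add,
      tr_kl m n M ξ, tr_kr m n M ζ, ← Matrix.mul_kronecker_mul, Matrix.trace_kronecker,
      Matrix.smul_mul, Matrix.one_mul, Matrix.mul_one, Matrix.trace_smul,
      Matrix.trace_one, smul_eq_mul, hξt, hζt, Fintype.card_fin]
    field_simp
    rw [← hA, ← hB]
    ring
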